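/- Assume S and B Bᵀ are positive definite. Then for all positive semidefinite p, P ∈ ℝ^{d×d}: (K(p) − K(P)) B = (I + P S)⁻¹ (p − P) S (I + p S)⁻¹, and ‖K(p) − K(P)‖_F ≤ λ_min(B Bᵀ)^{−1/2} · λ_max(S) · Tr(S) · ‖S⁻¹‖_F · ‖p − P‖_F. -/

import Mathlib

open Matrix

noncomputable section

/-- The largest eigenvalue of a symmetric matrix, via the Rayleigh
variational characterization. -/
def lamMax {d : ℕ} (M : Matrix (Fin d) (Fin d) ℝ) : ℝ :=
  sSup {r | ∃ x : Fin d → ℝ, x ⬝ᵥ x = 1 ∧ r = x ⬝ᵥ M.mulVec x}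

/-- The smallest eigenvalue of a symmetric matrix, via the Rayleigh
variational characterization. -/
def lamMin {d : ℕ} (M : Matrix (Fin d) (Fin d) ℝ) : ℝ :=
  sInf {r | ∃ x : Fin d → ℝ, x ⬝ᵥ x = 1 ∧ r = x ⬝ᵥ M.mulVec x}

/-- The Frobenius norm `‖M‖_F := √Tr(M Mᵀ)`. -/
def frobNorm {m n : ℕ} (M : Matrix (Fin m) (Fin n) ℝ) : ℝ :=
  Real.sqrt (Matrix.trace (M * Mᵀ))

open scoped MatrixOrder in
def Matrix.PosSemidef.sqrt {n : ℕ} {A : Matrix (Fin n) (Fin n) ℝ} (_hA : A.PosSemidef) :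
    Matrix (Fin n) (Fin n) ℝ :=
  CFC.sqrt A

open scoped MatrixOrder in
lemma Matrix.PosSemidef.sqrt_mul_self {n : ℕ} {A : Matrix (Fin n) (Fin n) ℝ} (hA : A.PosSemidef) :
    hA.sqrt * hA.sqrt = A :=
  CFC.sqrt_mul_sqrt_self A hA.nonneg

open scoped MatrixOrder in
lemma Matrix.PosSemidef.posSemidef_sqrt {n : ℕ} {A : Matrix (Fin n) (Fin n) ℝ}
    (hA : A.PosSemidef) : hA.sqrt.PosSemidef :=
  (CFC.sqrt_nonneg A).posSemidef

namespace Stmt12Aux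

lemma dot_self_nonneg {n : ℕ} (v : Fin n → ℝ) : 0 ≤ v ⬝ᵥ v :=
  Finset.sum_nonneg fun i _ => mul_self_nonneg (v i)

lemma dot_self_pos {n : ℕ} {v : Fin n → ℝ} (h : v ≠ 0) : 0 < v ⬝ᵥ v := by
  obtain ⟨i, hi⟩ := Function.ne_iff.mp h
  exact Finset.sum_pos' (fun j _ => mul_self_nonneg (v j))
    ⟨i, Finset.mem_univ i, mul_self_pos.mpr hi⟩

lemma dot_sq_le {n : ℕ} (a b : Fin n → ℝ) : (a ⬝ᵥ b) ^ 2 ≤ (a ⬝ᵥ a) * (b ⬝ᵥ b) := by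
  have := Finset.sum_mul_sq_le_sq_mul_sq Finset.univ a b
  simpa [dotProduct, sq] using this

lemma psd_apply {n : ℕ} {M : Matrix (Fin n) (Fin n) ℝ} (hM : M.PosSemidef) (x : Fin n → ℝ) :
    0 ≤ x ⬝ᵥ M *ᵥ x := by simpa using hM.dotProduct_mulVec_nonneg x

lemma conjPSD {m n : ℕ} {N : Matrix (Fin n) (Fin n) ℝ} (hN : N.PosSemidef)
    (X : Matrix (Fin m) (Fin n) ℝ) : (X * N * Xᵀ).PosSemidef := by
  simpa using hN.mul_mul_conjTranspose_same X

lemma smulPSD {n : ℕ} {c : ℝ} {M : Matrix (Fin n) (Fin n) ℝ} (hc : 0 ≤ c)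
    (hM : M.PosSemidef) : (c • M).PosSemidef := by
  refine Matrix.PosSemidef.of_dotProduct_mulVec_nonneg ?_ fun x => ?_
  · show (c • M)ᴴ = c • M
    rw [conjTranspose_smul, hM.1]; simp
  · rw [smul_mulVec, dotProduct_smul]
    simpa using mul_nonneg hc (by simpa using hM.dotProduct_mulVec_nonneg x)

lemma trace_psd_nonneg {n : ℕ} {M : Matrix (Fin n) (Fin n) ℝ} (hM : M.PosSemidef) :
    0 ≤ M.trace := by
  have h : ∀ i, 0 ≤ M i i := by
    intro i
    have := psd_apply hM (Pi.single i 1)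
    simpa [mulVec_single, dotProduct_single] using this
  exact Finset.sum_nonneg fun i _ => h i

lemma trace_conj_nonneg {m n : ℕ} {N : Matrix (Fin n) (Fin n) ℝ} (hN : N.PosSemidef)
    (X : Matrix (Fin m) (Fin n) ℝ) : 0 ≤ (X * N * Xᵀ).trace :=
  trace_psd_nonneg (conjPSD hN X)

lemma trace_conj_le {m n : ℕ} {N : Matrix (Fin n) (Fin n) ℝ} {c : ℝ}
    (h : (c • 1 - N).PosSemidef) (X : Matrix (Fin m) (Fin n) ℝ) :
    (X * N * Xᵀ).trace ≤ c * (X * Xᵀ).trace := by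
  have h0 := trace_conj_nonneg h X
  have e : X * (c • 1 - N) * Xᵀ = c • (X * Xᵀ) - X * N * Xᵀ := by
    rw [Matrix.mul_sub, Matrix.sub_mul, Matrix.mul_smul, Matrix.mul_one]; simp [Matrix.smul_mul]
  rw [e, trace_sub, trace_smul] at h0
  simpa using sub_nonneg.mp h0


lemma selfmul_psd {m n : ℕ} (M : Matrix (Fin m) (Fin n) ℝ) : (M * Mᵀ).PosSemidef := by
  simpa using posSemidef_self_mul_conjTranspose M

lemma frob_nonneg {m n : ℕ} (M : Matrix (Fin m) (Fin n) ℝ) : 0 ≤ frobNorm M :=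
  Real.sqrt_nonneg _

lemma trace_self_nonneg {m n : ℕ} (M : Matrix (Fin m) (Fin n) ℝ) : 0 ≤ (M * Mᵀ).trace :=
  trace_psd_nonneg (selfmul_psd M)

lemma frob_mul_right {a b c : ℕ} {A : Matrix (Fin b) (Fin c) ℝ} {t : ℝ} (ht : 0 ≤ t)
    (h : (t • 1 - A * Aᵀ).PosSemidef) (X : Matrix (Fin a) (Fin b) ℝ) :
    frobNorm (X * A) ≤ Real.sqrt t * frobNorm X := by
  have e : (X * A) * (X * A)ᵀ = X * (A * Aᵀ) * Xᵀ := by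
    rw [transpose_mul]; simp only [Matrix.mul_assoc]
  have h1 : ((X * A) * (X * A)ᵀ).trace ≤ t * (X * Xᵀ).trace := by
    rw [e]; exact trace_conj_le h X
  calc frobNorm (X * A) = Real.sqrt (((X * A) * (X * A)ᵀ).trace) := rfl
    _ ≤ Real.sqrt (t * (X * Xᵀ).trace) := Real.sqrt_le_sqrt h1
    _ = Real.sqrt t * frobNorm X := by rw [Real.sqrt_mul ht]; rfl

lemma frob_mul_left {a b c : ℕ} {A : Matrix (Fin a) (Fin b) ℝ} {t : ℝ} (ht : 0 ≤ t)
    (h : (t • 1 - Aᵀ * A).PosSemidef) (X : Matrix (Fin b) (Fin c) ℝ) :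
    frobNorm (A * X) ≤ Real.sqrt t * frobNorm X := by
  have e : (A * X) * (A * X)ᵀ = A * (X * Xᵀ) * Aᵀ := by
    rw [transpose_mul]; simp only [Matrix.mul_assoc]
  have e2 : ((A * X) * (A * X)ᵀ).trace = (Xᵀ * (Aᵀ * A) * Xᵀᵀ).trace := by
    rw [e, transpose_transpose]
    calc (A * (X * Xᵀ) * Aᵀ).trace = (Aᵀ * A * (X * Xᵀ)).trace :=
          Matrix.trace_mul_cycle A (X * Xᵀ) Aᵀ
      _ = ((X * Xᵀ) * (Aᵀ * A)).trace := Matrix.trace_mul_comm _ _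
      _ = (Xᵀ * (Aᵀ * A) * X).trace := (Matrix.trace_mul_cycle Xᵀ (Aᵀ * A) X).symm
  have h1 : ((A * X) * (A * X)ᵀ).trace ≤ t * (X * Xᵀ).trace := by
    rw [e2]
    calc (Xᵀ * (Aᵀ * A) * Xᵀᵀ).trace ≤ t * (Xᵀ * Xᵀᵀ).trace := trace_conj_le h Xᵀ
      _ = t * (X * Xᵀ).trace := by rw [transpose_transpose, Matrix.trace_mul_comm]
  calc frobNorm (A * X) = Real.sqrt (((A * X) * (A * X)ᵀ).trace) := rfl
    _ ≤ Real.sqrt (t * (X * Xᵀ).trace) := Real.sqrt_le_sqrt h1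
    _ = Real.sqrt t * frobNorm X := by rw [Real.sqrt_mul ht]; rfl

lemma trace_eq_sum_sq {m n : ℕ} (M : Matrix (Fin m) (Fin n) ℝ) :
    (M * Mᵀ).trace = ∑ i, ∑ j, (M i j) ^ 2 := by
  simp [Matrix.trace, Matrix.diag, Matrix.mul_apply, sq]

lemma frob_submul {a b c : ℕ} (A : Matrix (Fin a) (Fin b) ℝ) (B : Matrix (Fin b) (Fin c) ℝ) :
    frobNorm (A * B) ≤ frobNorm A * frobNorm B := by
  have key : ((A * B) * (A * B)ᵀ).trace ≤ (A * Aᵀ).trace * (B * Bᵀ).trace := by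
    rw [trace_eq_sum_sq, trace_eq_sum_sq, trace_eq_sum_sq]
    calc ∑ i, ∑ k, ((A * B) i k) ^ 2
        ≤ ∑ i, ∑ k, (∑ j, (A i j) ^ 2) * (∑ j, (B j k) ^ 2) := by
          refine Finset.sum_le_sum fun i _ => Finset.sum_le_sum fun k _ => ?_
          rw [Matrix.mul_apply]
          exact Finset.sum_mul_sq_le_sq_mul_sq Finset.univ _ _
      _ = (∑ i, ∑ j, (A i j) ^ 2) * (∑ k, ∑ j, (B j k) ^ 2) :=
          (Finset.sum_mul_sum Finset.univ Finset.univ (fun i => ∑ j, (A i j) ^ 2) (fun k => ∑ j, (B j k) ^ 2)).symm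
      _ = (∑ i, ∑ j, (A i j) ^ 2) * (∑ j, ∑ k, (B j k) ^ 2) := by
          congr 1; exact Finset.sum_comm
  calc frobNorm (A * B) = Real.sqrt (((A * B) * (A * B)ᵀ).trace) := rfl
    _ ≤ Real.sqrt ((A * Aᵀ).trace * (B * Bᵀ).trace) := Real.sqrt_le_sqrt key
    _ = frobNorm A * frobNorm B := by
        rw [Real.sqrt_mul (trace_self_nonneg A)]; rfl


def raySet {n : ℕ} (M : Matrix (Fin n) (Fin n) ℝ) : Set ℝ :=
  {r | ∃ x : Fin n → ℝ, x ⬝ᵥ x = 1 ∧ r = x ⬝ᵥ M.mulVec x}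

lemma lamMax_eq {n : ℕ} (M : Matrix (Fin n) (Fin n) ℝ) : lamMax M = sSup (raySet M) := rfl
lemma lamMin_eq {n : ℕ} (M : Matrix (Fin n) (Fin n) ℝ) : lamMin M = sInf (raySet M) := rfl

lemma norm_sq_eq_dot {n : ℕ} (x : EuclideanSpace ℝ (Fin n)) :
    x ∈ Metric.sphere (0 : EuclideanSpace ℝ (Fin n)) 1 ↔
      (WithLp.equiv 2 (Fin n → ℝ) x) ⬝ᵥ (WithLp.equiv 2 (Fin n → ℝ) x) = 1 := by
  rw [mem_sphere_zero_iff_norm, EuclideanSpace.norm_eq]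
  have hd : (WithLp.equiv 2 (Fin n → ℝ) x) ⬝ᵥ (WithLp.equiv 2 (Fin n → ℝ) x)
      = ∑ i, ‖x i‖ ^ 2 := by
    simp [dotProduct, Real.norm_eq_abs, sq_abs, sq]
  rw [← hd, Real.sqrt_eq_one]

lemma raySet_eq_image {n : ℕ} (M : Matrix (Fin n) (Fin n) ℝ) :
    raySet M = (fun x : EuclideanSpace ℝ (Fin n) =>
      (WithLp.equiv 2 (Fin n → ℝ) x) ⬝ᵥ M *ᵥ (WithLp.equiv 2 (Fin n → ℝ) x)) ''
      Metric.sphere 0 1 := by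
  ext r
  constructor
  · rintro ⟨x, hx1, rfl⟩
    exact ⟨(WithLp.equiv 2 (Fin n → ℝ)).symm x, (norm_sq_eq_dot _).mpr (by simpa using hx1), by simp⟩
  · rintro ⟨x, hx, rfl⟩
    exact ⟨WithLp.equiv 2 (Fin n → ℝ) x, (norm_sq_eq_dot x).mp hx, rfl⟩

lemma continuous_ray {n : ℕ} (M : Matrix (Fin n) (Fin n) ℝ) :
    Continuous (fun x : EuclideanSpace ℝ (Fin n) =>
      (WithLp.equiv 2 (Fin n → ℝ) x) ⬝ᵥ M *ᵥ (WithLp.equiv 2 (Fin n → ℝ) x)) := by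
  have h1 : Continuous (fun y : Fin n → ℝ => y ⬝ᵥ M *ᵥ y) := by
    have : (fun y : Fin n → ℝ => y ⬝ᵥ M *ᵥ y)
        = fun y : Fin n → ℝ => ∑ i, y i * ∑ j, M i j * y j := rfl
    rw [this]
    exact continuous_finset_sum _ fun i _ => (continuous_apply i).mul
      (continuous_finset_sum _ fun j _ => continuous_const.mul (continuous_apply j))
  exact h1.comp (PiLp.continuous_ofLp 2 (fun _ : Fin n => ℝ))

lemma isCompact_raySet {n : ℕ} (M : Matrix (Fin n) (Fin n) ℝ) : IsCompact (raySet M) := by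
  rw [raySet_eq_image]
  exact (isCompact_sphere 0 1).image (continuous_ray M)

lemma raySet_nonempty {n : ℕ} (hn : 1 ≤ n) (M : Matrix (Fin n) (Fin n) ℝ) :
    (raySet M).Nonempty := by
  refine ⟨_, ⟨Pi.single ⟨0, hn⟩ 1, ?_, rfl⟩⟩
  simp [single_dotProduct]

lemma lamMax_mem {n : ℕ} (hn : 1 ≤ n) (M : Matrix (Fin n) (Fin n) ℝ) : lamMax M ∈ raySet M :=
  (isCompact_raySet M).sSup_mem (raySet_nonempty hn M)

lemma lamMin_mem {n : ℕ} (hn : 1 ≤ n) (M : Matrix (Fin n) (Fin n) ℝ) : lamMin M ∈ raySet M :=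
  (isCompact_raySet M).sInf_mem (raySet_nonempty hn M)

lemma le_lamMax {n : ℕ} (M : Matrix (Fin n) (Fin n) ℝ) {x : Fin n → ℝ} (hx : x ⬝ᵥ x = 1) :
    x ⬝ᵥ M *ᵥ x ≤ lamMax M :=
  le_csSup (isCompact_raySet M).bddAbove ⟨x, hx, rfl⟩

lemma lamMin_le {n : ℕ} (M : Matrix (Fin n) (Fin n) ℝ) {x : Fin n → ℝ} (hx : x ⬝ᵥ x = 1) :
    lamMin M ≤ x ⬝ᵥ M *ᵥ x :=
  csInf_le (isCompact_raySet M).bddBelow ⟨x, hx, rfl⟩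

lemma lamMax_pos {n : ℕ} {M : Matrix (Fin n) (Fin n) ℝ} (hM : M.PosDef) (hn : 1 ≤ n) :
    0 < lamMax M := by
  obtain ⟨x, hx1, heq⟩ := lamMax_mem hn M
  have hx0 : x ≠ 0 := by rintro rfl; simp at hx1
  rw [heq]; simpa using hM.dotProduct_mulVec_pos hx0

lemma lamMin_pos {n : ℕ} {M : Matrix (Fin n) (Fin n) ℝ} (hM : M.PosDef) (hn : 1 ≤ n) :
    0 < lamMin M := by
  obtain ⟨x, hx1, heq⟩ := lamMin_mem hn M
  have hx0 : x ≠ 0 := by rintro rfl; simp at hx1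
  rw [heq]; simpa using hM.dotProduct_mulVec_pos hx0


-- transpose of hermitian real matrix
lemma herm_transpose {n : ℕ} {M : Matrix (Fin n) (Fin n) ℝ} (h : M.IsHermitian) : Mᵀ = M := by
  rw [← Matrix.conjTranspose_eq_transpose_of_trivial]; exact h

lemma psd_quad_le {n : ℕ} {M : Matrix (Fin n) (Fin n) ℝ} {c : ℝ}
    (h : (c • 1 - M).PosSemidef) (y : Fin n → ℝ) : y ⬝ᵥ M *ᵥ y ≤ c * (y ⬝ᵥ y) := by
  have := psd_apply h y
  rw [Matrix.sub_mulVec, dotProduct_sub, smul_mulVec, one_mulVec, dotProduct_smul] at this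
  simpa using sub_nonneg.mp this

lemma psd_of_quad {n : ℕ} {M : Matrix (Fin n) (Fin n) ℝ} (hherm : M.IsHermitian)
    (h : ∀ y : Fin n → ℝ, 0 ≤ y ⬝ᵥ M *ᵥ y) : M.PosSemidef :=
  Matrix.PosSemidef.of_dotProduct_mulVec_nonneg hherm fun y => by simpa using h y

lemma smul_one_sub_herm {n : ℕ} {M : Matrix (Fin n) (Fin n) ℝ} (h : M.IsHermitian) (c : ℝ) :
    (c • (1 : Matrix (Fin n) (Fin n) ℝ) - M).IsHermitian := by
  show _ᴴ = _
  rw [conjTranspose_sub, conjTranspose_smul, conjTranspose_one, h.eq]; simp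

lemma sub_smul_one_herm {n : ℕ} {M : Matrix (Fin n) (Fin n) ℝ} (h : M.IsHermitian) (c : ℝ) :
    (M - c • (1 : Matrix (Fin n) (Fin n) ℝ)).IsHermitian := by
  show _ᴴ = _
  rw [conjTranspose_sub, conjTranspose_smul, conjTranspose_one, h.eq]; simp

-- normalization
lemma quad_le_of_unit_le {n : ℕ} {M : Matrix (Fin n) (Fin n) ℝ} {c : ℝ}
    (h : ∀ x : Fin n → ℝ, x ⬝ᵥ x = 1 → x ⬝ᵥ M *ᵥ x ≤ c) (y : Fin n → ℝ) :
    y ⬝ᵥ M *ᵥ y ≤ c * (y ⬝ᵥ y) := by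
  by_cases hy : y = 0
  · subst hy; simp
  · have hs : 0 < y ⬝ᵥ y := dot_self_pos hy
    set a : ℝ := Real.sqrt (y ⬝ᵥ y) with ha
    have ha0 : 0 < a := Real.sqrt_pos.mpr hs
    have haa : a * a = y ⬝ᵥ y := Real.mul_self_sqrt hs.le
    have hx1 : (a⁻¹ • y) ⬝ᵥ (a⁻¹ • y) = 1 := by
      rw [smul_dotProduct, dotProduct_smul, smul_eq_mul, smul_eq_mul]
      field_simp
      nlinarith
    have := h _ hx1
    rw [smul_dotProduct, Matrix.mulVec_smul, dotProduct_smul, smul_eq_mul, smul_eq_mul] at this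
    have h2 : y ⬝ᵥ M *ᵥ y ≤ c * (a * a) := by
      have ha2 : (0:ℝ) < a * a := by positivity
      calc y ⬝ᵥ M *ᵥ y = (a * a) * (a⁻¹ * (a⁻¹ * (y ⬝ᵥ M *ᵥ y))) := by
            field_simp
        _ ≤ (a * a) * c := by nlinarith
        _ = c * (a * a) := by ring
    rwa [haa] at h2

lemma unit_le_of_quad_le {n : ℕ} {M : Matrix (Fin n) (Fin n) ℝ} {c : ℝ}
    (h : ∀ x : Fin n → ℝ, x ⬝ᵥ x = 1 → c ≤ x ⬝ᵥ M *ᵥ x) (y : Fin n → ℝ) :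
    c * (y ⬝ᵥ y) ≤ y ⬝ᵥ M *ᵥ y := by
  have := quad_le_of_unit_le (M := -M) (c := -c) (fun x hx => by
    have := h x hx; rw [Matrix.neg_mulVec, dotProduct_neg]; linarith) y
  rw [Matrix.neg_mulVec, dotProduct_neg] at this
  linarith


lemma lamMax_smul_one_sub_psd {n : ℕ} {M : Matrix (Fin n) (Fin n) ℝ} (h : M.IsHermitian) :
    (lamMax M • 1 - M).PosSemidef := by
  refine psd_of_quad (smul_one_sub_herm h _) fun y => ?_
  have := quad_le_of_unit_le (fun x hx => le_lamMax M hx) y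
  rw [Matrix.sub_mulVec, dotProduct_sub, smul_mulVec, one_mulVec, dotProduct_smul]
  simpa using this

lemma sub_lamMin_smul_psd {n : ℕ} {M : Matrix (Fin n) (Fin n) ℝ} (h : M.IsHermitian) :
    (M - lamMin M • 1).PosSemidef := by
  refine psd_of_quad (sub_smul_one_herm h _) fun y => ?_
  have := unit_le_of_quad_le (fun x hx => lamMin_le M hx) y
  rw [Matrix.sub_mulVec, dotProduct_sub, smul_mulVec, one_mulVec, dotProduct_smul]
  simpa using this

lemma trace_mul_psd_nonneg {n : ℕ} {A C : Matrix (Fin n) (Fin n) ℝ}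
    (hA : A.PosSemidef) (hC : C.PosSemidef) : 0 ≤ (A * C).trace := by
  set T := hA.sqrt with hT
  have hTT : T * T = A := hA.sqrt_mul_self
  have hTt : Tᵀ = T := herm_transpose hA.posSemidef_sqrt.isHermitian
  have e : (A * C).trace = (T * C * Tᵀ).trace := by
    rw [hTt, ← hTT, Matrix.mul_assoc, Matrix.trace_mul_comm T (T * C)]
  rw [e]; exact trace_conj_nonneg hC T

lemma lamMax_le_trace {n : ℕ} {M : Matrix (Fin n) (Fin n) ℝ} (hM : M.PosSemidef)
    (hn : 1 ≤ n) : lamMax M ≤ M.trace := by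
  refine csSup_le (raySet_nonempty hn M) ?_
  rintro r ⟨x, hx1, rfl⟩
  -- x ⬝ᵥ M *ᵥ x = trace (M * xxᵀ) and trace (M * (1 - xxᵀ)) ≥ 0
  set Xx : Matrix (Fin n) (Fin n) ℝ := Matrix.of fun i j => x i * x j with hXx
  have hXxpsd : (1 - Xx).PosSemidef := by
    refine psd_of_quad ?_ fun y => ?_
    · show _ᴴ = _
      rw [conjTranspose_sub, conjTranspose_one]
      congr 1
      ext i j
      simp [hXx, conjTranspose_apply, mul_comm]
    · have hmv : Xx *ᵥ y = fun i => x i * (x ⬝ᵥ y) := by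
        ext i
        simp [hXx, mulVec, dotProduct, Finset.mul_sum, mul_assoc]
      rw [Matrix.sub_mulVec, dotProduct_sub, one_mulVec, hmv]
      have : (y ⬝ᵥ fun i => x i * (x ⬝ᵥ y)) = (x ⬝ᵥ y) * (x ⬝ᵥ y) := by
        simp only [dotProduct]
        have key : ∀ c : ℝ, ∑ i, y i * (x i * c) = (∑ i, x i * y i) * c := fun c => by
          rw [Finset.sum_mul]; exact Finset.sum_congr rfl fun i _ => by ring
        exact key _
      rw [this]
      have := dot_sq_le x y
      rw [hx1, one_mul] at this
      nlinarith [this]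
  have hquad : x ⬝ᵥ M *ᵥ x = (M * Xx).trace := by
    simp [Matrix.trace, Matrix.diag, Matrix.mul_apply, hXx, dotProduct, mulVec, Finset.mul_sum]
    rw [Finset.sum_comm]
    have hMs : ∀ a b, M a b = M b a := fun a b => by
      conv_lhs => rw [← herm_transpose hM.1]
      simp
    refine Finset.sum_congr rfl fun i _ => Finset.sum_congr rfl fun j _ => by
      rw [hMs j i]; ring
  have hsplit : (M * Xx).trace ≤ M.trace := by
    have h0 : 0 ≤ (M * (1 - Xx)).trace := trace_mul_psd_nonneg hM hXxpsd
    rw [Matrix.mul_sub, Matrix.mul_one, trace_sub] at h0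
    linarith
  rw [hquad]; exact hsplit


lemma sqPSD {n : ℕ} {L : Matrix (Fin n) (Fin n) ℝ} {c : ℝ} (hL : L.PosSemidef) (hc : 0 ≤ c)
    (h : (c • 1 - L).PosSemidef) : ((c * c) • (1 : Matrix (Fin n) (Fin n) ℝ) - L * L).PosSemidef := by
  set U := h.sqrt with hU
  have hUU : U * U = c • 1 - L := h.sqrt_mul_self
  have hUt : Uᵀ = U := herm_transpose h.posSemidef_sqrt.isHermitian
  have key : (c * c) • (1 : Matrix (Fin n) (Fin n) ℝ) - L * L = U * (c • 1 + L) * Uᵀ := by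
    rw [hUt]
    have h2 : c • (1 : Matrix (Fin n) (Fin n) ℝ) + L = (2 * c) • 1 - U * U := by
      rw [hUU]; module
    rw [h2]
    have expand : U * ((2 * c) • (1 : Matrix (Fin n) (Fin n) ℝ) - U * U) * U
        = (2 * c) • (U * U) - (U * U) * (U * U) := by
      rw [Matrix.mul_sub, Matrix.sub_mul, Matrix.mul_smul, Matrix.mul_one, Matrix.smul_mul]
      simp only [Matrix.mul_assoc]
    rw [expand, hUU]
    simp only [Matrix.sub_mul, Matrix.mul_sub, Matrix.smul_mul, Matrix.mul_smul,
      Matrix.one_mul, Matrix.mul_one, smul_smul]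
    module
  rw [key]
  exact conjPSD (Matrix.PosSemidef.add (smulPSD hc Matrix.PosSemidef.one) hL) U

lemma invLE {n : ℕ} {M : Matrix (Fin n) (Fin n) ℝ} {t : ℝ} (hM : M.PosDef) (ht : 0 < t)
    (h : (M - t • 1).PosSemidef) : (t⁻¹ • (1 : Matrix (Fin n) (Fin n) ℝ) - M⁻¹).PosSemidef := by
  have hdet : IsUnit M.det := (Matrix.isUnit_iff_isUnit_det M).mp hM.isUnit
  have hMi : M⁻¹ * M = 1 := Matrix.nonsing_inv_mul M hdet
  have hiM : M * M⁻¹ = 1 := Matrix.mul_nonsing_inv M hdet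
  set T := hM.posSemidef.sqrt with hT
  have hTT : T * T = M := hM.posSemidef.sqrt_mul_self
  have hTt : Tᵀ = T := herm_transpose hM.posSemidef.posSemidef_sqrt.isHermitian
  have hMit : M⁻¹ᵀ = M⁻¹ := by
    rw [Matrix.transpose_nonsing_inv, herm_transpose hM.isHermitian]
  have hTMT : T * M * T = M * M := by
    have h4 : T * (T * T) * T = (T * T) * (T * T) := by simp only [Matrix.mul_assoc]
    rwa [hTT] at h4
  have e1 : T * (M - t • 1) * T = M * M - t • M := by
    rw [Matrix.mul_sub, Matrix.sub_mul, Matrix.mul_smul, Matrix.mul_one, Matrix.smul_mul, hTT,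
      hTMT]
  have e2 : M⁻¹ * (M * M - t • M) * M⁻¹ = 1 - t • M⁻¹ := by
    rw [Matrix.mul_sub, Matrix.sub_mul]
    congr 1
    · rw [← Matrix.mul_assoc, hMi, Matrix.one_mul, hiM]
    · rw [Matrix.mul_smul, Matrix.smul_mul, hMi, Matrix.one_mul]
  have e3 : t⁻¹ • (1 : Matrix (Fin n) (Fin n) ℝ) - M⁻¹ = t⁻¹ • (1 - t • M⁻¹) := by
    rw [smul_sub, smul_smul, inv_mul_cancel₀ ht.ne', one_smul]
  rw [e3, ← e2, ← e1]
  refine smulPSD (by positivity) ?_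
  have step1 : (T * (M - t • 1) * T).PosSemidef := by
    have := conjPSD h T; rwa [hTt] at this
  have := conjPSD step1 M⁻¹
  rwa [hMit] at this
lemma gram_flip {a b : ℕ} {W : Matrix (Fin a) (Fin b) ℝ} {c : ℝ} (hc : 0 ≤ c)
    (h : (c • 1 - Wᵀ * W).PosSemidef) : (c • 1 - W * Wᵀ).PosSemidef := by
  refine psd_of_quad ?_ fun z => ?_
  · refine smul_one_sub_herm ?_ c
    show _ᴴ = _
    rw [Matrix.conjTranspose_eq_transpose_of_trivial, Matrix.transpose_mul, transpose_transpose]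
  · have hWy : ∀ y : Fin b → ℝ, (W *ᵥ y) ⬝ᵥ (W *ᵥ y) ≤ c * (y ⬝ᵥ y) := by
      intro y
      have := psd_quad_le h y
      rwa [show y ⬝ᵥ (Wᵀ * W) *ᵥ y = (W *ᵥ y) ⬝ᵥ (W *ᵥ y) from by
        rw [← Matrix.mulVec_mulVec, dotProduct_mulVec, Matrix.vecMul_transpose]] at this
    have hz : z ⬝ᵥ (W * Wᵀ) *ᵥ z = (Wᵀ *ᵥ z) ⬝ᵥ (Wᵀ *ᵥ z) := by
      rw [← Matrix.mulVec_mulVec, dotProduct_mulVec, Matrix.mulVec_transpose]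
    have goal_eq : z ⬝ᵥ (c • 1 - W * Wᵀ) *ᵥ z = c * (z ⬝ᵥ z) - (Wᵀ *ᵥ z) ⬝ᵥ (Wᵀ *ᵥ z) := by
      rw [Matrix.sub_mulVec, dotProduct_sub, smul_mulVec, one_mulVec, dotProduct_smul,
        smul_eq_mul, hz]
    rw [goal_eq]
    rcases eq_or_lt_of_le (dot_self_nonneg (Wᵀ *ᵥ z)) with huu | huu
    · have : c * (z ⬝ᵥ z) ≥ 0 := mul_nonneg hc (dot_self_nonneg z)
      linarith
    · have e : (Wᵀ *ᵥ z) ⬝ᵥ (Wᵀ *ᵥ z) = (W *ᵥ (Wᵀ *ᵥ z)) ⬝ᵥ z := by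
        conv_lhs => rw [dotProduct_mulVec, Matrix.vecMul_transpose]
      have hCS : ((Wᵀ *ᵥ z) ⬝ᵥ (Wᵀ *ᵥ z)) ^ 2
          ≤ ((W *ᵥ (Wᵀ *ᵥ z)) ⬝ᵥ (W *ᵥ (Wᵀ *ᵥ z))) * (z ⬝ᵥ z) := by
        rw [e]; exact dot_sq_le _ _
      have h2 : (W *ᵥ (Wᵀ *ᵥ z)) ⬝ᵥ (W *ᵥ (Wᵀ *ᵥ z)) ≤ c * ((Wᵀ *ᵥ z) ⬝ᵥ (Wᵀ *ᵥ z)) :=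
        hWy (Wᵀ *ᵥ z)
      have h3 : ((Wᵀ *ᵥ z) ⬝ᵥ (Wᵀ *ᵥ z)) ^ 2 ≤ c * ((Wᵀ *ᵥ z) ⬝ᵥ (Wᵀ *ᵥ z)) * (z ⬝ᵥ z) :=
        le_trans hCS (by nlinarith [dot_self_nonneg z])
      nlinarith

end Stmt12Aux

open Stmt12Aux
/-- Assume `S := Bᵀ R₀⁻¹ B` and `B Bᵀ` are positive definite.  Then
for all positive semidefinite `p, P`:
`(K(p) − K(P)) B = (I + P S)⁻¹ (p − P) S (I + p S)⁻¹` and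
`‖K(p) − K(P)‖_F ≤ λ_min(B Bᵀ)^{−1/2} λ_max(S) Tr(S) ‖S⁻¹‖_F ‖p − P‖_F`,
where `K(P) := P Bᵀ (B P Bᵀ + R₀)⁻¹`. -/
theorem statement12 {d d₀ : ℕ} (hd : 1 ≤ d) (hd₀ : 1 ≤ d₀)
    (A : Matrix (Fin d) (Fin d) ℝ) (B : Matrix (Fin d₀) (Fin d) ℝ)
    (R₀ : Matrix (Fin d₀) (Fin d₀) ℝ) (hR₀ : R₀.PosDef)
    (S : Matrix (Fin d) (Fin d) ℝ) (hSdef : S = Bᵀ * R₀⁻¹ * B)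
    (hS : S.PosDef) (hBBt : (B * Bᵀ).PosDef)
    (K : Matrix (Fin d) (Fin d) ℝ → Matrix (Fin d) (Fin d₀) ℝ)
    (hK : ∀ Q, K Q = Q * Bᵀ * (B * Q * Bᵀ + R₀)⁻¹)
    (p P : Matrix (Fin d) (Fin d) ℝ) (hp : p.PosSemidef) (hP : P.PosSemidef) :
    (K p - K P) * B = (1 + P * S)⁻¹ * (p - P) * S * (1 + p * S)⁻¹ ∧
    frobNorm (K p - K P) ≤
      (Real.sqrt (lamMin (B * Bᵀ)))⁻¹ * lamMax S * Matrix.trace S *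
        frobNorm S⁻¹ * frobNorm (p - P) := by
  have hBBtd : IsUnit (B * Bᵀ).det := (Matrix.isUnit_iff_isUnit_det _).mp hBBt.isUnit
  have hR₀d : IsUnit R₀.det := (Matrix.isUnit_iff_isUnit_det _).mp hR₀.isUnit
  have hSd : IsUnit S.det := (Matrix.isUnit_iff_isUnit_det _).mp hS.isUnit
  set T := hS.posSemidef.sqrt with hT
  have hTT : T * T = S := hS.posSemidef.sqrt_mul_self
  have hTt : Tᵀ = T := herm_transpose hS.posSemidef.posSemidef_sqrt.isHermitian
  have hTd : IsUnit T.det := by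
    have h0 : IsUnit (T.det * T.det) := by rw [← Matrix.det_mul, hTT]; exact hSd
    exact isUnit_of_mul_isUnit_left h0
  have hTiT : T⁻¹ * T = 1 := Matrix.nonsing_inv_mul T hTd
  have hTTi : T * T⁻¹ = 1 := Matrix.mul_nonsing_inv T hTd
  have hTiX : ∀ X : Matrix (Fin d) (Fin d) ℝ, T⁻¹ * (T * X) = X := fun X => by
    rw [← Matrix.mul_assoc, hTiT, Matrix.one_mul]
  have hTXi : ∀ X : Matrix (Fin d) (Fin d) ℝ, T * (T⁻¹ * X) = X := fun X => by
    rw [← Matrix.mul_assoc, hTTi, Matrix.one_mul]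
  -- main per-Q facts
  have key : ∀ Q : Matrix (Fin d) (Fin d) ℝ, Q.PosSemidef →
      (1 + T * Q * T).PosDef ∧ IsUnit (1 + Q * S).det ∧
      (1 + Q * S)⁻¹ = T⁻¹ * (1 + T * Q * T)⁻¹ * T ∧
      K Q * B = Q * S * (1 + Q * S)⁻¹ := by
    intro Q hQ
    have hTQT : (T * Q * T).PosSemidef := by
      have := conjPSD hQ T; rwa [hTt] at this
    have hMQ : (1 + T * Q * T).PosDef := Matrix.PosDef.add_posSemidef Matrix.PosDef.one hTQT
    have hMQd : IsUnit (1 + T * Q * T).det := (Matrix.isUnit_iff_isUnit_det _).mp hMQ.isUnit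
    have hMQi : (1 + T * Q * T) * (1 + T * Q * T)⁻¹ = 1 := Matrix.mul_nonsing_inv _ hMQd
    have hfac : 1 + Q * S = T⁻¹ * (1 + T * Q * T) * T := by
      have hsub : T⁻¹ * (T * Q * T) * T = Q * S := by
        have h5 : T⁻¹ * (T * Q * T) * T = T⁻¹ * (T * (Q * (T * T))) := by
          simp only [Matrix.mul_assoc]
        rw [h5, hTT, hTiX]
      rw [Matrix.mul_add, Matrix.mul_one, Matrix.add_mul, hTiT, hsub]
    have cancel2 : ∀ Y : Matrix (Fin d) (Fin d) ℝ, Y * Y⁻¹ = 1 →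
        (T⁻¹ * Y * T) * (T⁻¹ * Y⁻¹ * T) = 1 := by
      intro Y hY
      have hmid2 : Y * (Y⁻¹ * T) = T := by rw [← Matrix.mul_assoc, hY, Matrix.one_mul]
      calc (T⁻¹ * Y * T) * (T⁻¹ * Y⁻¹ * T)
          = T⁻¹ * (Y * (T * (T⁻¹ * (Y⁻¹ * T)))) := by simp only [Matrix.mul_assoc]
        _ = T⁻¹ * (Y * (Y⁻¹ * T)) := by rw [hTXi]
        _ = T⁻¹ * T := by rw [hmid2]
        _ = 1 := hTiT
    have hrinv : (1 + Q * S) * (T⁻¹ * (1 + T * Q * T)⁻¹ * T) = 1 := by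
      rw [hfac]; exact cancel2 _ hMQi
    have hunit : IsUnit (1 + Q * S).det := Matrix.isUnit_det_of_right_inverse hrinv
    have hinv : (1 + Q * S)⁻¹ = T⁻¹ * (1 + T * Q * T)⁻¹ * T := Matrix.inv_eq_right_inv hrinv
    have hH : (B * Q * Bᵀ + R₀).PosDef :=
      Matrix.PosDef.posSemidef_add (by simpa using hQ.mul_mul_conjTranspose_same B) hR₀
    have hHd : IsUnit (B * Q * Bᵀ + R₀).det := (Matrix.isUnit_iff_isUnit_det _).mp hH.isUnit
    have hBexp : B * (1 + Q * S) = (B * Q * Bᵀ + R₀) * (R₀⁻¹ * B) := by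
      rw [Matrix.mul_add, Matrix.mul_one, hSdef, Matrix.add_mul]
      have hr : R₀ * (R₀⁻¹ * B) = B := by
        rw [← Matrix.mul_assoc, Matrix.mul_nonsing_inv _ hR₀d, Matrix.one_mul]
      have hl : B * (Q * (Bᵀ * R₀⁻¹ * B)) = B * Q * Bᵀ * (R₀⁻¹ * B) := by
        simp only [Matrix.mul_assoc]
      rw [hr, add_comm, ← hl, Matrix.mul_assoc]
    have hKQB : K Q * B = Q * S * (1 + Q * S)⁻¹ := by
      have step : K Q * B * (1 + Q * S) = Q * S := by
        rw [hK Q]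
        have h6 : Q * Bᵀ * (B * Q * Bᵀ + R₀)⁻¹ * B * (1 + Q * S)
            = Q * Bᵀ * ((B * Q * Bᵀ + R₀)⁻¹ * (B * (1 + Q * S))) := by
          simp only [Matrix.mul_assoc]
        rw [h6, hBexp, ← Matrix.mul_assoc ((B * Q * Bᵀ + R₀)⁻¹) _ _,
          Matrix.nonsing_inv_mul _ hHd, Matrix.one_mul, hSdef]
        simp only [Matrix.mul_assoc]
      calc K Q * B = K Q * B * ((1 + Q * S) * (1 + Q * S)⁻¹) := by
            rw [Matrix.mul_nonsing_inv _ hunit, Matrix.mul_one]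
        _ = (K Q * B * (1 + Q * S)) * (1 + Q * S)⁻¹ := by simp only [Matrix.mul_assoc]
        _ = Q * S * (1 + Q * S)⁻¹ := by rw [step]
    exact ⟨hMQ, hunit, hinv, hKQB⟩
  obtain ⟨hMp, hup, hinvp, hKpB⟩ := key p hp
  obtain ⟨hMP, huP, hinvP, hKPB⟩ := key P hP
  -- commute (P*S) with the inverse
  have comm_inv : ∀ (X a : Matrix (Fin d) (Fin d) ℝ), IsUnit a.det → X * a = a * X →
      X * a⁻¹ = a⁻¹ * X := by
    intro X a ha h
    have l : a⁻¹ * (X * a) * a⁻¹ = a⁻¹ * X := by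
      have h7 : a⁻¹ * (X * a) * a⁻¹ = a⁻¹ * (X * (a * a⁻¹)) := by simp only [Matrix.mul_assoc]
      rw [h7, Matrix.mul_nonsing_inv _ ha, Matrix.mul_one]
    have r : a⁻¹ * (a * X) * a⁻¹ = X * a⁻¹ := by
      rw [← Matrix.mul_assoc, Matrix.nonsing_inv_mul _ ha, Matrix.one_mul]
    rw [← r, ← h, l]
  have hKPB' : K P * B = (1 + P * S)⁻¹ * (P * S) := by
    rw [hKPB]
    exact comm_inv (P * S) (1 + P * S) huP (by noncomm_ring)
  -- part 1
  have ha : (1 + P * S)⁻¹ * (1 + P * S) = 1 := Matrix.nonsing_inv_mul _ huP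
  have hb : (1 + p * S) * (1 + p * S)⁻¹ = 1 := Matrix.mul_nonsing_inv _ hup
  have hY1 : (1 + P * S)⁻¹ * ((1 + P * S) * (p * S)) * (1 + p * S)⁻¹
      = p * S * (1 + p * S)⁻¹ := by
    rw [← Matrix.mul_assoc ((1 + P * S)⁻¹) (1 + P * S) (p * S), ha, Matrix.one_mul]
  have hY2 : (1 + P * S)⁻¹ * ((P * S) * (1 + p * S)) * (1 + p * S)⁻¹
      = (1 + P * S)⁻¹ * (P * S) := by
    have h8 : (1 + P * S)⁻¹ * ((P * S) * (1 + p * S)) * (1 + p * S)⁻¹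
        = (1 + P * S)⁻¹ * ((P * S) * ((1 + p * S) * (1 + p * S)⁻¹)) := by
      simp only [Matrix.mul_assoc]
    rw [h8, hb, Matrix.mul_one]
  have hmid : (1 + P * S) * (p * S) - (P * S) * (1 + p * S) = (p - P) * S := by noncomm_ring
  have part1 : (K p - K P) * B = (1 + P * S)⁻¹ * (p - P) * S * (1 + p * S)⁻¹ := by
    calc (K p - K P) * B = p * S * (1 + p * S)⁻¹ - (1 + P * S)⁻¹ * (P * S) := by
          rw [Matrix.sub_mul, hKpB, hKPB']
      _ = (1 + P * S)⁻¹ * ((1 + P * S) * (p * S)) * (1 + p * S)⁻¹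
          - (1 + P * S)⁻¹ * ((P * S) * (1 + p * S)) * (1 + p * S)⁻¹ := by rw [hY1, hY2]
      _ = (1 + P * S)⁻¹ * ((1 + P * S) * (p * S) - (P * S) * (1 + p * S)) * (1 + p * S)⁻¹ := by
          rw [Matrix.mul_sub, Matrix.sub_mul]
      _ = (1 + P * S)⁻¹ * ((p - P) * S) * (1 + p * S)⁻¹ := by rw [hmid]
      _ = (1 + P * S)⁻¹ * (p - P) * S * (1 + p * S)⁻¹ := by simp only [Matrix.mul_assoc]
  refine ⟨part1, ?_⟩
  -- part 2
  have hc : 0 < lamMax S := lamMax_pos hS hd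
  have hNfacts : ∀ Q : Matrix (Fin d) (Fin d) ℝ, Q.PosSemidef → (1 + T * Q * T).PosDef →
      (T * (1 + T * Q * T)⁻¹ * T).PosSemidef ∧
      ((lamMax S) • 1 - T * (1 + T * Q * T)⁻¹ * T).PosSemidef := by
    intro Q hQ hQpd
    have hinvpsd : ((1 + T * Q * T)⁻¹).PosSemidef := hQpd.inv.posSemidef
    have hNpsd : (T * (1 + T * Q * T)⁻¹ * T).PosSemidef := by
      have := conjPSD hinvpsd T; rwa [hTt] at this
    have hone : ((1 : Matrix (Fin d) (Fin d) ℝ) - (1 + T * Q * T)⁻¹).PosSemidef := by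
      have h7 : ((1 + T * Q * T) - (1 : ℝ) • 1).PosSemidef := by
        rw [one_smul, add_sub_cancel_left]
        have := conjPSD hQ T; rwa [hTt] at this
      have := invLE hQpd one_pos h7
      rwa [inv_one, one_smul] at this
    have hSmN : (S - T * (1 + T * Q * T)⁻¹ * T).PosSemidef := by
      have h9 := conjPSD hone T
      rw [hTt, Matrix.mul_sub, Matrix.mul_one, Matrix.sub_mul, hTT] at h9
      exact h9
    have hcS : ((lamMax S) • 1 - S).PosSemidef := lamMax_smul_one_sub_psd hS.isHermitian
    have hsplit : ((lamMax S) • 1 - T * (1 + T * Q * T)⁻¹ * T)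
        = ((lamMax S) • 1 - S) + (S - T * (1 + T * Q * T)⁻¹ * T) := by abel
    exact ⟨hNpsd, by rw [hsplit]; exact Matrix.PosSemidef.add hcS hSmN⟩
  obtain ⟨hLpsd, hLle⟩ := hNfacts P hP hMP
  obtain ⟨hRpsd, hRle⟩ := hNfacts p hp hMp
  have hLt : (T * (1 + T * P * T)⁻¹ * T)ᵀ = T * (1 + T * P * T)⁻¹ * T :=
    herm_transpose hLpsd.isHermitian
  have hRt : (T * (1 + T * p * T)⁻¹ * T)ᵀ = T * (1 + T * p * T)⁻¹ * T :=
    herm_transpose hRpsd.isHermitian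
  have hLL := sqPSD hLpsd hc.le hLle
  have hRR := sqPSD hRpsd hc.le hRle
  -- the B-side
  have hlam : 0 < lamMin (B * Bᵀ) := lamMin_pos hBBt hd₀
  have hGinv := invLE hBBt hlam (sub_lamMin_smul_psd hBBt.isHermitian)
  have hGit : ((B * Bᵀ)⁻¹)ᵀ = (B * Bᵀ)⁻¹ := by
    rw [Matrix.transpose_nonsing_inv, herm_transpose hBBt.isHermitian]
  have hWtW : (Bᵀ * (B * Bᵀ)⁻¹)ᵀ * (Bᵀ * (B * Bᵀ)⁻¹) = (B * Bᵀ)⁻¹ := by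
    rw [Matrix.transpose_mul, transpose_transpose, hGit]
    calc (B * Bᵀ)⁻¹ * B * (Bᵀ * (B * Bᵀ)⁻¹)
        = (B * Bᵀ)⁻¹ * ((B * Bᵀ) * (B * Bᵀ)⁻¹) := by simp only [Matrix.mul_assoc]
      _ = (B * Bᵀ)⁻¹ := by rw [Matrix.mul_nonsing_inv _ hBBtd, Matrix.mul_one]
  have hWW : ((lamMin (B * Bᵀ))⁻¹ • 1 - (Bᵀ * (B * Bᵀ)⁻¹) * (Bᵀ * (B * Bᵀ)⁻¹)ᵀ).PosSemidef := by
    refine gram_flip (by positivity) ?_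
    rw [hWtW]; exact hGinv
  -- factorization
  have hDW : K p - K P = ((K p - K P) * B) * (Bᵀ * (B * Bᵀ)⁻¹) := by
    calc K p - K P = (K p - K P) * (1 : Matrix (Fin d₀) (Fin d₀) ℝ) := by rw [Matrix.mul_one]
      _ = (K p - K P) * ((B * Bᵀ) * (B * Bᵀ)⁻¹) := by rw [Matrix.mul_nonsing_inv _ hBBtd]
      _ = ((K p - K P) * B) * (Bᵀ * (B * Bᵀ)⁻¹) := by simp only [Matrix.mul_assoc]
  have hSinv : S⁻¹ = T⁻¹ * T⁻¹ := by rw [← hTT, Matrix.mul_inv_rev]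
  have hSL : S⁻¹ * (T * (1 + T * P * T)⁻¹ * T) = (1 + P * S)⁻¹ := by
    rw [hinvP, hSinv]
    calc T⁻¹ * T⁻¹ * (T * (1 + T * P * T)⁻¹ * T)
        = T⁻¹ * (T⁻¹ * (T * ((1 + T * P * T)⁻¹ * T))) := by simp only [Matrix.mul_assoc]
      _ = T⁻¹ * ((1 + T * P * T)⁻¹ * T) := by rw [hTiX]
      _ = T⁻¹ * (1 + T * P * T)⁻¹ * T := by rw [← Matrix.mul_assoc]
  have hRdef : S * (1 + p * S)⁻¹ = T * (1 + T * p * T)⁻¹ * T := by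
    rw [hinvp, ← hTT]
    calc T * T * (T⁻¹ * (1 + T * p * T)⁻¹ * T)
        = T * (T * (T⁻¹ * ((1 + T * p * T)⁻¹ * T))) := by simp only [Matrix.mul_assoc]
      _ = T * ((1 + T * p * T)⁻¹ * T) := by rw [hTXi]
      _ = T * (1 + T * p * T)⁻¹ * T := by rw [← Matrix.mul_assoc]
  have hfact : K p - K P = S⁻¹ * ((T * (1 + T * P * T)⁻¹ * T) *
      ((p - P) * ((T * (1 + T * p * T)⁻¹ * T) * (Bᵀ * (B * Bᵀ)⁻¹)))) := by
    rw [hDW, part1, ← hSL, ← hRdef]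
    simp only [Matrix.mul_assoc]
  -- the norm chain
  have hcc : Real.sqrt (lamMax S * lamMax S) = lamMax S := Real.sqrt_mul_self hc.le
  have hWs : Real.sqrt ((lamMin (B * Bᵀ))⁻¹) = (Real.sqrt (lamMin (B * Bᵀ)))⁻¹ :=
    Real.sqrt_inv _
  have hfS : 0 ≤ frobNorm S⁻¹ := frob_nonneg _
  have hfΔ : 0 ≤ frobNorm (p - P) := frob_nonneg _
  have hin : (0:ℝ) ≤ (Real.sqrt (lamMin (B * Bᵀ)))⁻¹ := by positivity
  have b1 : frobNorm (K p - K P) ≤ frobNorm S⁻¹ * frobNorm ((T * (1 + T * P * T)⁻¹ * T) *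
      ((p - P) * ((T * (1 + T * p * T)⁻¹ * T) * (Bᵀ * (B * Bᵀ)⁻¹)))) := by
    rw [hfact]; exact frob_submul _ _
  have b2 : frobNorm ((T * (1 + T * P * T)⁻¹ * T) *
      ((p - P) * ((T * (1 + T * p * T)⁻¹ * T) * (Bᵀ * (B * Bᵀ)⁻¹))))
      ≤ lamMax S * frobNorm ((p - P) * ((T * (1 + T * p * T)⁻¹ * T) * (Bᵀ * (B * Bᵀ)⁻¹))) := by
    have := frob_mul_left (A := T * (1 + T * P * T)⁻¹ * T) (t := lamMax S * lamMax S)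
      (by positivity) (by rw [hLt]; exact hLL)
      ((p - P) * ((T * (1 + T * p * T)⁻¹ * T) * (Bᵀ * (B * Bᵀ)⁻¹)))
    rwa [hcc] at this
  have b3 : frobNorm ((p - P) * ((T * (1 + T * p * T)⁻¹ * T) * (Bᵀ * (B * Bᵀ)⁻¹)))
      ≤ (Real.sqrt (lamMin (B * Bᵀ)))⁻¹ * frobNorm ((p - P) * (T * (1 + T * p * T)⁻¹ * T)) := by
    have h9 : (p - P) * ((T * (1 + T * p * T)⁻¹ * T) * (Bᵀ * (B * Bᵀ)⁻¹))
        = ((p - P) * (T * (1 + T * p * T)⁻¹ * T)) * (Bᵀ * (B * Bᵀ)⁻¹) := by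
      simp only [Matrix.mul_assoc]
    rw [h9]
    have := frob_mul_right (A := Bᵀ * (B * Bᵀ)⁻¹) (t := (lamMin (B * Bᵀ))⁻¹)
      (by positivity) hWW ((p - P) * (T * (1 + T * p * T)⁻¹ * T))
    rwa [hWs] at this
  have b4 : frobNorm ((p - P) * (T * (1 + T * p * T)⁻¹ * T)) ≤ lamMax S * frobNorm (p - P) := by
    have hA : ((lamMax S * lamMax S) • 1
        - (T * (1 + T * p * T)⁻¹ * T) * (T * (1 + T * p * T)⁻¹ * T)ᵀ).PosSemidef := by
      rw [hRt]; exact hRR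
    have := frob_mul_right (t := lamMax S * lamMax S) (by positivity) hA (p - P)
    rwa [hcc] at this
  have htr : lamMax S ≤ Matrix.trace S := lamMax_le_trace hS.posSemidef hd
  calc frobNorm (K p - K P)
      ≤ frobNorm S⁻¹ * frobNorm ((T * (1 + T * P * T)⁻¹ * T) *
        ((p - P) * ((T * (1 + T * p * T)⁻¹ * T) * (Bᵀ * (B * Bᵀ)⁻¹)))) := b1
    _ ≤ frobNorm S⁻¹ * (lamMax S *
        frobNorm ((p - P) * ((T * (1 + T * p * T)⁻¹ * T) * (Bᵀ * (B * Bᵀ)⁻¹)))) :=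
        mul_le_mul_of_nonneg_left b2 hfS
    _ ≤ frobNorm S⁻¹ * (lamMax S * ((Real.sqrt (lamMin (B * Bᵀ)))⁻¹ *
        frobNorm ((p - P) * (T * (1 + T * p * T)⁻¹ * T)))) :=
        mul_le_mul_of_nonneg_left (mul_le_mul_of_nonneg_left b3 hc.le) hfS
    _ ≤ frobNorm S⁻¹ * (lamMax S * ((Real.sqrt (lamMin (B * Bᵀ)))⁻¹ *
        (lamMax S * frobNorm (p - P)))) :=
        mul_le_mul_of_nonneg_left (mul_le_mul_of_nonneg_left
          (mul_le_mul_of_nonneg_left b4 hin) hc.le) hfS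
    _ = (Real.sqrt (lamMin (B * Bᵀ)))⁻¹ * lamMax S * lamMax S * frobNorm S⁻¹
        * frobNorm (p - P) := by ring
    _ ≤ (Real.sqrt (lamMin (B * Bᵀ)))⁻¹ * lamMax S * Matrix.trace S * frobNorm S⁻¹
        * frobNorm (p - P) := by
        refine mul_le_mul_of_nonneg_right (mul_le_mul_of_nonneg_right ?_ hfS) hfΔ
        exact mul_le_mul_of_nonneg_left htr (by positivity)
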